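/- Every tensor A ∈ C^{m×n×p} admits a T-SVD: A = U * S * V^H, where U ∈ C^{m×m×p} and V ∈ C^{n×n×p} are unitary tensors and S ∈ C^{m×n×p} is an F-diagonal tensor (each frontal slice of its Fourier-domain block diagonalization is a diagonal matrix with nonnegative entries). -/

import Mathlib

open Matrix Kronecker
open scoped ComplexOrder

namespace TProd

/-- A third-order tensor with `p` frontal slices, each a matrix indexed by `ι × κ`. -/
abbrev Tensor (ι κ : Type) (p : ℕ) := Fin p → Matrix ι κ ℂ

variable {p : ℕ} [NeZero p]

/-- Block circulant matrix of a tensor: block `(i,j)` is the frontal slice `A (i - j)`. -/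
def bcirc {ι κ : Type} (A : Tensor ι κ p) : Matrix (Fin p × ι) (Fin p × κ) ℂ :=
  Matrix.of fun ik jl => A (ik.1 - jl.1) ik.2 jl.2

/-- Stack the frontal slices vertically. -/
def tunfold {ι κ : Type} (A : Tensor ι κ p) : Matrix (Fin p × ι) κ ℂ :=
  Matrix.of fun ik j => A ik.1 ik.2 j

/-- Inverse of `tunfold`. -/
def tfold {ι κ : Type} (M : Matrix (Fin p × ι) κ ℂ) : Tensor ι κ p :=
  fun k => Matrix.of fun a b => M (k, a) b

/-- The T-product `A * B := fold (bcirc A · unfold B)`. -/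
noncomputable def tprod {ι κ μ : Type} [Fintype κ] (A : Tensor ι κ p) (B : Tensor κ μ p) :
    Tensor ι μ p :=
  tfold (bcirc A * tunfold B)

/-- Tensor conjugate transpose: conjugate-transpose each slice and reverse slices 2..p. -/
def tconjT {ι κ : Type} (A : Tensor ι κ p) : Tensor κ ι p := fun k => (A (-k))ᴴ

/-- Tensor transpose: transpose each slice and reverse slices 2..p. -/
def ttransp {ι κ : Type} (A : Tensor ι κ p) : Tensor κ ι p := fun k => (A (-k))ᵀ

/-- The identity tensor: identity first frontal slice, other slices zero. -/
def tid (ι : Type) [DecidableEq ι] (p : ℕ) [NeZero p] : Tensor ι ι p :=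
  fun k => if k = 0 then 1 else 0

/-- Left inverse of `bcirc`: extract the first block column. -/
def bcircInv {ι κ : Type} (M : Matrix (Fin p × ι) (Fin p × κ) ℂ) : Tensor ι κ p :=
  fun k => Matrix.of fun a b => M (k, a) ((0 : Fin p), b)

/-- The unitary discrete Fourier matrix of size `p`. -/
noncomputable def Fmat (p : ℕ) : Matrix (Fin p) (Fin p) ℂ :=
  Matrix.of fun j k =>
    Complex.exp (-(2 * Real.pi * Complex.I * (j : ℕ) * (k : ℕ)) / p) / (Real.sqrt p : ℂ)

/-- Fourier-domain block diagonalization `(F_pᴴ ⊗ I) · bcirc A · (F_p ⊗ I)`. -/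
noncomputable def fblocks {ι κ : Type} [Fintype ι] [Fintype κ] [DecidableEq ι] [DecidableEq κ]
    (A : Tensor ι κ p) : Matrix (Fin p × ι) (Fin p × κ) ℂ :=
  ((Fmat p)ᴴ ⊗ₖ (1 : Matrix ι ι ℂ)) * bcirc A * (Fmat p ⊗ₖ (1 : Matrix κ κ ℂ))

/-- `S` is F-diagonal: Fourier blocks are (generalized) diagonal with nonnegative real
entries. -/
def IsFDiag {ι κ : Type} [Fintype ι] [Fintype κ] [DecidableEq ι] [DecidableEq κ]
    (S : Tensor ι κ p) : Prop :=
  (∀ i j a b, fblocks S (i, a) (j, b) ≠ 0 → i = j) ∧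
  (∀ x y y', fblocks S x y ≠ 0 → fblocks S x y' ≠ 0 → y = y') ∧
  (∀ x x' y, fblocks S x y ≠ 0 → fblocks S x' y ≠ 0 → x = x') ∧
  (∀ x y, 0 ≤ (fblocks S x y).re ∧ (fblocks S x y).im = 0)

/-- A tensor `Q` is unitary for the T-product. -/
def IsTUnitary {ι : Type} [Fintype ι] [DecidableEq ι] (Q : Tensor ι ι p) : Prop :=
  tprod (tconjT Q) Q = tid ι p ∧ tprod Q (tconjT Q) = tid ι p

/-- `(U, S, V)` is a T-SVD of `A`. -/
def IsTSVD {ι κ : Type} [Fintype ι] [Fintype κ] [DecidableEq ι] [DecidableEq κ]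
    (A : Tensor ι κ p) (U : Tensor ι ι p) (S : Tensor ι κ p) (V : Tensor κ κ p) : Prop :=
  IsTUnitary U ∧ IsTUnitary V ∧ IsFDiag S ∧ A = tprod U (tprod S (tconjT V))

/-- Apply a scalar function to the singular values of an F-diagonal tensor. -/
noncomputable def fhat {ι κ : Type} [Fintype ι] [Fintype κ] [DecidableEq ι] [DecidableEq κ]
    (f : ℂ → ℂ) (S : Tensor ι κ p) : Tensor ι κ p :=
  bcircInv ((Fmat p ⊗ₖ (1 : Matrix ι ι ℂ)) * (fblocks S).map f *
    ((Fmat p)ᴴ ⊗ₖ (1 : Matrix κ κ ℂ)))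

open Classical in
/-- The generalized tensor function induced by the scalar function `f` via the T-SVD. -/
noncomputable def gtf {ι κ : Type} [Fintype ι] [Fintype κ] [DecidableEq ι] [DecidableEq κ]
    (f : ℂ → ℂ) (A : Tensor ι κ p) : Tensor ι κ p :=
  if h : ∃ t : Tensor ι ι p × Tensor ι κ p × Tensor κ κ p, IsTSVD A t.1 t.2.1 t.2.2 then
    tprod h.choose.1 (tprod (fhat f h.choose.2.1) (tconjT h.choose.2.2))
  else 0

/-- An odd scalar function. -/
def OddFn (f : ℂ → ℂ) : Prop := ∀ z, f (-z) = -f z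

open Classical in
/-- The Moore–Penrose inverse of a matrix. -/
noncomputable def mpinv {ι κ : Type} [Fintype ι] [Fintype κ] (M : Matrix ι κ ℂ) :
    Matrix κ ι ℂ :=
  if h : ∃ N : Matrix κ ι ℂ,
      M * N * M = M ∧ N * M * N = N ∧ (M * N)ᴴ = M * N ∧ (N * M)ᴴ = N * M then
    h.choose
  else 0

/-- The Moore–Penrose inverse of a tensor: `A^† := bcirc⁻¹ ((bcirc A)^†)`. -/
noncomputable def tpinv {ι κ : Type} [Fintype ι] [Fintype κ] (A : Tensor ι κ p) :
    Tensor κ ι p :=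
  bcircInv (mpinv (bcirc A))

open Classical in
/-- Matrix function of a Hermitian matrix via the spectral theorem. -/
noncomputable def hermFun {ι : Type} [Fintype ι] [DecidableEq ι] (f : ℂ → ℂ)
    (M : Matrix ι ι ℂ) : Matrix ι ι ℂ :=
  if h : M.IsHermitian then
    (h.eigenvectorUnitary : Matrix ι ι ℂ) *
      Matrix.diagonal (fun i => f ((h.eigenvalues i : ℝ) : ℂ)) *
      (h.eigenvectorUnitary : Matrix ι ι ℂ)ᴴ
  else 0

open Classical in
/-- Square root of a positive semidefinite matrix. -/
noncomputable def msqrt {ι : Type} [Fintype ι] [DecidableEq ι] (M : Matrix ι ι ℂ) :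
    Matrix ι ι ℂ :=
  if h : M.PosSemidef then
    (h.1.eigenvectorUnitary : Matrix ι ι ℂ) *
      Matrix.diagonal (fun i => ((Real.sqrt (h.1.eigenvalues i) : ℝ) : ℂ)) *
      (star h.1.eigenvectorUnitary : Matrix ι ι ℂ)
  else 0

/-- The standard tensor T-function (here used on Hermitian tensors). -/
noncomputable def stdTf {ι : Type} [Fintype ι] [DecidableEq ι] (f : ℂ → ℂ)
    (A : Tensor ι ι p) : Tensor ι ι p :=
  bcircInv (hermFun f (bcirc A))

/-- The tensor square root of a (PSD) F-square tensor. -/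
noncomputable def tsqrt {ι : Type} [Fintype ι] [DecidableEq ι] (A : Tensor ι ι p) :
    Tensor ι ι p :=
  bcircInv (msqrt (bcirc A))

/-- 2×2 block tensor, formed by block-concatenating frontal slices. -/
def tblock {ι₁ ι₂ κ₁ κ₂ : Type} (A : Tensor ι₁ κ₁ p) (B : Tensor ι₁ κ₂ p)
    (C : Tensor ι₂ κ₁ p) (D : Tensor ι₂ κ₂ p) : Tensor (ι₁ ⊕ ι₂) (κ₁ ⊕ κ₂) p :=
  fun k => Matrix.fromBlocks (A k) (B k) (C k) (D k)

end TProd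

/- ======================= auxiliary development ======================= -/

section AuxSVD

open Matrix
open scoped ComplexOrder

private lemma downclosed_initial {n : ℕ} (P : Fin n → Prop) [DecidablePred P]
    (hdc : ∀ i j : Fin n, i ≤ j → P j → P i) (j : Fin n) :
    P j ↔ (j : ℕ) < (Finset.univ.filter P).card := by
  constructor
  · intro hj
    have hsub : Finset.Iic j ⊆ Finset.univ.filter P := by
      intro k hk
      simp only [Finset.mem_Iic] at hk
      simp only [Finset.mem_filter, Finset.mem_univ, true_and]
      exact hdc k j hk hj
    have := Finset.card_le_card hsub
    rw [Fin.card_Iic] at this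
    omega
  · intro hj
    by_contra hP
    have hsub : Finset.univ.filter P ⊆ Finset.Iio j := by
      intro k hk
      simp only [Finset.mem_filter, Finset.mem_univ, true_and] at hk
      simp only [Finset.mem_Iio]
      by_contra hkj
      exact hP (hdc j k (le_of_not_gt hkj) hk)
    have := Finset.card_le_card hsub
    rw [Fin.card_Iio] at this
    omega

private lemma colGram {k l : ℕ} (f : Fin l → EuclideanSpace ℂ (Fin k)) (hf : Orthonormal ℂ f) :
    (Matrix.of fun x a => f a x)ᴴ * (Matrix.of fun x a => f a x) = 1 := by
  ext a c
  have h := orthonormal_iff_ite.mp hf a c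
  rw [EuclideanSpace.inner_eq_star_dotProduct, dotProduct_comm] at h
  simpa [Matrix.mul_apply, Matrix.conjTranspose_apply, Matrix.one_apply, dotProduct,
    WithLp.equiv] using h

private lemma orthonormal_of_dot {k : ℕ} {ι : Type*} [DecidableEq ι]
    (f : ι → EuclideanSpace ℂ (Fin k))
    (h : ∀ i j, dotProduct (star (f i)) (f j) = if i = j then 1 else 0) :
    Orthonormal ℂ f := by
  rw [orthonormal_iff_ite]
  intro i j
  rw [EuclideanSpace.inner_eq_star_dotProduct, dotProduct_comm]
  exact h i j

private lemma dot_of_orthonormal {k : ℕ} {ι : Type*} [DecidableEq ι]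
    {f : ι → EuclideanSpace ℂ (Fin k)}
    (hf : Orthonormal ℂ f) (i j : ι) :
    dotProduct (star (f i)) (f j) = if i = j then 1 else 0 := by
  have h := orthonormal_iff_ite.mp hf i j
  rw [EuclideanSpace.inner_eq_star_dotProduct, dotProduct_comm] at h
  exact h

private theorem matrix_svd {m n : ℕ} (M : Matrix (Fin m) (Fin n) ℂ) :
    ∃ (U : Matrix (Fin m) (Fin m) ℂ) (S : Matrix (Fin m) (Fin n) ℂ)
      (V : Matrix (Fin n) (Fin n) ℂ),
      Uᴴ * U = 1 ∧ U * Uᴴ = 1 ∧ Vᴴ * V = 1 ∧ V * Vᴴ = 1 ∧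
      (∀ a b, S a b ≠ 0 → (a : ℕ) = (b : ℕ)) ∧
      (∀ a b, 0 ≤ (S a b).re ∧ (S a b).im = 0) ∧
      M = U * S * Vᴴ := by
  classical
  have hH : (Mᴴ * M).IsHermitian := isHermitian_conjTranspose_mul_self M
  have hPSD : (Mᴴ * M).PosSemidef := posSemidef_conjTranspose_mul_self M
  set τ : Equiv.Perm (Fin n) := Tuple.sort (fun j => -hH.eigenvalues j) with hτ
  set μ : Fin n → ℝ := fun j => hH.eigenvalues (τ j) with hμ
  have hμ0 : ∀ j, 0 ≤ μ j := fun j => hPSD.eigenvalues_nonneg _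
  have hanti : Antitone μ := by
    intro i j hij
    have := Tuple.monotone_sort (fun j => -hH.eigenvalues j) hij
    simpa [μ] using this
  set v : Fin n → EuclideanSpace ℂ (Fin n) := fun j => hH.eigenvectorBasis (τ j) with hv
  have hvon : Orthonormal ℂ v := hH.eigenvectorBasis.orthonormal.comp _ τ.injective
  have hvdot : ∀ i j, dotProduct (star (v i)) (v j) = if i = j then 1 else 0 :=
    fun i j => dot_of_orthonormal hvon i j
  have hHv : ∀ j, (Mᴴ * M) *ᵥ (v j) = (μ j : ℂ) • (v j) := by
    intro j
    have := hH.mulVec_eigenvectorBasis (τ j)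
    rw [RCLike.real_smul_eq_coe_smul (K := ℂ)] at this
    exact this
  set w : Fin n → (Fin m → ℂ) := fun j => M *ᵥ (v j) with hw
  have hwdot : ∀ i j, dotProduct (star (w i)) (w j) = if i = j then (μ j : ℂ) else 0 := by
    intro i j
    calc star (M *ᵥ v i) ⬝ᵥ (M *ᵥ v j)
        = (star (v i) ᵥ* Mᴴ) ⬝ᵥ (M *ᵥ v j) := by rw [star_mulVec]
      _ = star (v i) ⬝ᵥ (Mᴴ *ᵥ (M *ᵥ v j)) := (dotProduct_mulVec _ _ _).symm
      _ = star (v i) ⬝ᵥ ((Mᴴ * M) *ᵥ v j) := by rw [mulVec_mulVec]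
      _ = star (v i) ⬝ᵥ ((μ j : ℂ) • v j) := by rw [hHv j]
      _ = (μ j : ℂ) * (star (v i) ⬝ᵥ v j) := dotProduct_smul _ _ _
      _ = if i = j then (μ j : ℂ) else 0 := by rw [hvdot i j]; split <;> simp
  set r : ℕ := (Finset.univ.filter fun j : Fin n => μ j ≠ 0).card with hr
  have hlt : ∀ j : Fin n, μ j ≠ 0 ↔ (j : ℕ) < r := by
    intro j
    exact downclosed_initial (fun j => μ j ≠ 0)
      (fun i j hij hPj => by
        intro h0
        exact hPj (le_antisymm (by rw [← h0]; exact hanti hij) (hμ0 j))) j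
  have hrn : r ≤ n := by
    have := Finset.card_filter_le Finset.univ (fun j : Fin n => μ j ≠ 0)
    simpa using this
  set σ : Fin n → ℝ := fun j => Real.sqrt (μ j) with hσ
  set u : Fin n → EuclideanSpace ℂ (Fin m) := fun j => WithLp.toLp 2 (((σ j : ℂ))⁻¹ • w j) with hu
  have hudot : ∀ i j : Fin n, (i : ℕ) < r → (j : ℕ) < r →
      dotProduct (star (u i)) (u j) = if i = j then 1 else 0 := by
    intro i j hi hj
    have hμj : μ j ≠ 0 := (hlt j).mpr hj
    have hσj : σ j ≠ 0 := Real.sqrt_ne_zero'.mpr (lt_of_le_of_ne (hμ0 j) (Ne.symm hμj))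
    simp only [hu, WithLp.ofLp_toLp, star_smul, smul_dotProduct, dotProduct_smul, star_inv₀,
      RCLike.star_def, Complex.conj_ofReal, hwdot i j]
    split
    · rename_i hij
      subst hij
      rw [smul_eq_mul, smul_eq_mul]
      have : ((σ i : ℂ)) * (σ i : ℂ) = (μ i : ℂ) := by
        rw [← Complex.ofReal_mul, Real.mul_self_sqrt (hμ0 i)]
      have hσj' : (σ i : ℂ) ≠ 0 := by exact_mod_cast hσj
      rw [← this]
      field_simp
    · simp
  -- r ≤ m
  have hrm : r ≤ m := by
    by_cases hr0 : r = 0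
    · omega
    · have hon : Orthonormal ℂ (fun i : Fin r =>
        (u ⟨(i : ℕ), lt_of_lt_of_le i.2 hrn⟩ : EuclideanSpace ℂ (Fin m))) := by
        apply orthonormal_of_dot
        intro i j
        rw [hudot ⟨(i : ℕ), lt_of_lt_of_le i.2 hrn⟩ ⟨(j : ℕ), lt_of_lt_of_le j.2 hrn⟩
          i.2 j.2]
        simp [Fin.ext_iff]
      have := hon.linearIndependent.fintype_card_le_finrank
      simpa using this
  -- extension to an orthonormal basis of ℂ^m
  set s : Set (Fin m) := {a | (a : ℕ) < r} with hs
  set g : Fin m → EuclideanSpace ℂ (Fin m) := fun a =>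
    if h : (a : ℕ) < r then u ⟨(a : ℕ), lt_of_lt_of_le h hrn⟩ else 0 with hg
  have hgon : Orthonormal ℂ (s.restrict g) := by
    apply orthonormal_of_dot
    intro i j
    have hi : ((i : Fin m) : ℕ) < r := i.2
    have hj : ((j : Fin m) : ℕ) < r := j.2
    simp only [Set.restrict_apply, Set.restrict, hg, hi, hj, dif_pos]
    rw [hudot _ _ hi hj]
    simp [Fin.ext_iff, Subtype.ext_iff]
  obtain ⟨b, hb⟩ := hgon.exists_orthonormalBasis_extension_of_card_eq (by simp)
  set U : Matrix (Fin m) (Fin m) ℂ := Matrix.of fun x a => b a x with hU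
  set V : Matrix (Fin n) (Fin n) ℂ := Matrix.of fun x j => v j x with hV
  set S : Matrix (Fin m) (Fin n) ℂ := Matrix.of fun a c =>
    if (a : ℕ) = (c : ℕ) then (σ c : ℂ) else 0 with hS
  have hUU : Uᴴ * U = 1 := colGram b b.orthonormal
  have hVV : Vᴴ * V = 1 := colGram v hvon
  refine ⟨U, S, V, hUU, (mul_eq_one_comm).mp hUU, hVV, (mul_eq_one_comm).mp hVV, ?_, ?_, ?_⟩
  · intro a c h
    by_contra hne
    simp [hS, hne] at h
  · intro a c
    rw [hS]
    simp only [Matrix.of_apply]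
    split
    · exact ⟨by simp only [Complex.ofReal_re, hσ]; exact Real.sqrt_nonneg (μ c), by simp⟩
    · simp
  · -- M = U * S * Vᴴ
    have hwzero : ∀ j : Fin n, ¬ ((j : ℕ) < r) → w j = 0 := by
      intro j hj
      have hμj : μ j = 0 := by
        by_contra h; exact hj ((hlt j).mp h)
      have h2 : star (w j) ⬝ᵥ w j = 0 := by rw [hwdot j j]; simp [hμj]
      exact dotProduct_star_self_eq_zero.mp h2
    have hMV : M * V = U * S := by
      ext x j
      have hL : (M * V) x j = w j x := by
        simp [Matrix.mul_apply, hw, Matrix.mulVec, dotProduct, hV]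
      rw [hL]
      have hR : (U * S) x j = ∑ a : Fin m, (if (a : ℕ) = (j : ℕ) then U x a * (σ j : ℂ) else 0) := by
        simp only [Matrix.mul_apply, hS, Matrix.of_apply]
        congr 1; ext a; split <;> simp
      rw [hR]
      by_cases hjm : (j : ℕ) < m
      · set a₀ : Fin m := ⟨(j : ℕ), hjm⟩ with ha₀
        rw [Finset.sum_eq_single a₀]
        · rw [if_pos (show ((a₀ : Fin m) : ℕ) = (j : ℕ) from rfl)]
          by_cases hjr : (j : ℕ) < r
          · have ha₀s : a₀ ∈ s := hjr
            have : U x a₀ = u ⟨(a₀ : ℕ), lt_of_lt_of_le hjr hrn⟩ x := by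
              rw [hU]
              simp only [Matrix.of_apply]
              rw [hb a₀ ha₀s, hg]
              beta_reduce
              rw [dif_pos (show (a₀ : ℕ) < r from hjr)]
            rw [this]
            have hj' : (⟨(a₀ : ℕ), lt_of_lt_of_le hjr hrn⟩ : Fin n) = j := by
              simp [Fin.ext_iff, ha₀]
            rw [hj', hu]
            have hμj : μ j ≠ 0 := (hlt j).mpr hjr
            have hσj : (σ j : ℂ) ≠ 0 := by
              simp only [ne_eq, Complex.ofReal_eq_zero]
              exact Real.sqrt_ne_zero'.mpr (lt_of_le_of_ne (hμ0 j) (Ne.symm hμj))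
            simp only [Pi.smul_apply, smul_eq_mul]
            field_simp
          · have hσj : σ j = 0 := by
              have : μ j = 0 := by by_contra h; exact hjr ((hlt j).mp h)
              simp [hσ, this]
            rw [hσj]
            have : w j = 0 := hwzero j hjr
            simp [this]
        · intro a _ ha
          rw [if_neg]
          simp only [ha₀, ne_eq] at ha ⊢
          intro h
          exact ha (Fin.ext h)
        · intro h
          simp at h
      · have h0 : ∀ a : Fin m, ¬((a : ℕ) = (j : ℕ)) := by
          intro a h; exact hjm (h ▸ a.2)
        rw [Finset.sum_eq_zero (by intro a _; rw [if_neg (h0 a)])]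
        have : w j = 0 := hwzero j (by omega)
        simp [this]
    calc M = M * (V * Vᴴ) := by rw [(mul_eq_one_comm).mp hVV, Matrix.mul_one]
      _ = (M * V) * Vᴴ := by rw [Matrix.mul_assoc]
      _ = U * S * Vᴴ := by rw [hMV]

end AuxSVD


namespace TProd

open Matrix

variable {p : ℕ} [NeZero p]

/-- character `e p t = exp (2πit/p)` -/
noncomputable def eC (p : ℕ) (t : ℤ) : ℂ := Complex.exp (2 * Real.pi * Complex.I * t / p)

lemma eC_add (s t : ℤ) : eC p (s + t) = eC p s * eC p t := by
  rw [eC, eC, eC, ← Complex.exp_add]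
  congr 1
  push_cast
  ring

lemma conj_eC (t : ℤ) : (starRingEnd ℂ) (eC p t) = eC p (-t) := by
  rw [eC, eC, ← Complex.exp_conj]
  congr 1
  simp [Complex.ext_iff]

lemma eC_pow (t : ℤ) (l : ℕ) : eC p t ^ l = eC p (l * t) := by
  rw [eC, eC, ← Complex.exp_nat_mul]
  congr 1
  push_cast
  ring

lemma eC_eq_one_iff (t : ℤ) : eC p t = 1 ↔ (p : ℤ) ∣ t := by
  have hp : (p : ℂ) ≠ 0 := by
    exact_mod_cast Nat.cast_ne_zero.mpr (NeZero.ne p)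
  rw [eC, Complex.exp_eq_one_iff]
  constructor
  · rintro ⟨k, hk⟩
    refine ⟨k, ?_⟩
    have h2 : (2 : ℂ) * Real.pi * Complex.I ≠ 0 := by
      simp [Real.pi_ne_zero, Complex.I_ne_zero]
    field_simp at hk
    have h3 : (2 * (Real.pi : ℂ) * Complex.I) * (t : ℂ)
        = (2 * (Real.pi : ℂ) * Complex.I) * ((k : ℂ) * (p : ℂ)) := by
      linear_combination (2 * (Real.pi : ℂ) * Complex.I) * hk
    have h4 : (t : ℂ) = (k : ℂ) * (p : ℂ) := mul_left_cancel₀ h2 h3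
    have h5 : t = k * p := by exact_mod_cast h4
    exact h5.trans (mul_comm k _)
  · rintro ⟨k, hk⟩
    refine ⟨k, ?_⟩
    rw [hk]
    push_cast
    field_simp

lemma eC_congr {s t : ℤ} (h : (p : ℤ) ∣ (s - t)) : eC p s = eC p t := by
  obtain ⟨k, hk⟩ := h
  have hst : s = t + p * k := by omega
  rw [hst, eC_add, (eC_eq_one_iff _).mpr ⟨k, rfl⟩, mul_one]

lemma sum_eC (t : ℤ) :
    (∑ l : Fin p, eC p ((l : ℤ) * t)) = if (p : ℤ) ∣ t then (p : ℂ) else 0 := by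
  have hrw : ∀ l : Fin p, eC p ((l : ℤ) * t) = eC p t ^ (l : ℕ) := by
    intro l; rw [eC_pow]
  simp_rw [hrw]
  rw [Fin.sum_univ_eq_sum_range (fun l => eC p t ^ l) p]
  split
  · rename_i h
    rw [(eC_eq_one_iff t).mpr h]
    simp
  · rename_i h
    have h1 : eC p t ≠ 1 := fun hc => h ((eC_eq_one_iff t).mp hc)
    rw [geom_sum_eq h1]
    have h2 : eC p t ^ p = 1 := by
      rw [eC_pow]
      exact (eC_eq_one_iff _).mpr ⟨t, by ring⟩
    rw [h2]
    simp

lemma dvd_sub_iff_eq (i j : Fin p) : (p : ℤ) ∣ ((i : ℤ) - (j : ℤ)) ↔ i = j := by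
  constructor
  · intro h
    have h1 : |((i : ℤ) - (j : ℤ))| < p := by
      have := i.2; have := j.2
      rw [abs_lt]
      omega
    have := Int.eq_zero_of_abs_lt_dvd h h1
    have : (i : ℤ) = (j : ℤ) := by omega
    exact Fin.ext (by exact_mod_cast this)
  · rintro rfl
    simp

/-- `p`-indexed block-diagonal matrix. -/
def bdiag {ι κ : Type} (D : Fin p → Matrix ι κ ℂ) : Matrix (Fin p × ι) (Fin p × κ) ℂ :=
  Matrix.of fun x y => if x.1 = y.1 then D x.1 x.2 y.2 else 0

lemma bdiag_mul {ι κ μ' : Type} [Fintype κ] (D : Fin p → Matrix ι κ ℂ)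
    (E : Fin p → Matrix κ μ' ℂ) :
    bdiag D * bdiag E = bdiag (fun i => D i * E i) := by
  ext ⟨i, a⟩ ⟨j, b⟩
  simp only [bdiag, Matrix.mul_apply, Matrix.of_apply, Fintype.sum_prod_type]
  rw [Finset.sum_eq_single i]
  · by_cases hij : i = j
    · subst hij
      simp
    · simp [hij]
  · intro k _ hk
    simp [Ne.symm hk]
  · simp

lemma bdiag_conjTranspose {ι κ : Type} (D : Fin p → Matrix ι κ ℂ) :
    (bdiag D)ᴴ = bdiag (fun i => (D i)ᴴ) := by
  ext ⟨i, a⟩ ⟨j, b⟩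
  simp only [bdiag, Matrix.conjTranspose_apply, Matrix.of_apply]
  by_cases hij : i = j
  · subst hij; simp
  · simp [hij, Ne.symm hij]

lemma bdiag_one {ι : Type} [Fintype ι] [DecidableEq ι] :
    bdiag (fun _ : Fin p => (1 : Matrix ι ι ℂ)) = 1 := by
  ext ⟨i, a⟩ ⟨j, b⟩
  simp only [bdiag, Matrix.of_apply, Matrix.one_apply, Prod.mk.injEq]
  by_cases hij : i = j
  · subst hij
    by_cases hab : a = b <;> simp [hab]
  · simp [hij]

lemma bcirc_tprod {ι κ μ' : Type} [Fintype κ] (A : Tensor ι κ p) (B : Tensor κ μ' p) :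
    bcirc (tprod A B) = bcirc A * bcirc B := by
  ext ⟨k, a⟩ ⟨l, b⟩
  simp only [bcirc, tprod, tfold, tunfold, Matrix.mul_apply, Matrix.of_apply,
    Fintype.sum_prod_type]
  rw [← Equiv.sum_comp (Equiv.addRight l) (fun j => ∑ c, A (k - j) a c * B (j - l) c b)]
  apply Finset.sum_congr rfl
  intro j _
  apply Finset.sum_congr rfl
  intro c _
  congr 2
  · simp [Equiv.coe_addRight, sub_add_eq_sub_sub, sub_right_comm]
  · simp [Equiv.coe_addRight]

lemma bcirc_tconjT {ι κ : Type} (A : Tensor ι κ p) : bcirc (tconjT A) = (bcirc A)ᴴ := by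
  ext ⟨k, a⟩ ⟨l, b⟩
  simp only [bcirc, tconjT, Matrix.conjTranspose_apply, Matrix.of_apply]
  rw [neg_sub]

lemma bcirc_tid {ι : Type} [DecidableEq ι] : bcirc (tid ι p) = 1 := by
  ext ⟨k, a⟩ ⟨l, b⟩
  simp only [bcirc, tid, Matrix.of_apply, Matrix.one_apply, Prod.mk.injEq]
  by_cases hkl : k = l
  · subst hkl
    simp [Matrix.one_apply]
  · have : ¬ (k - l = 0) := fun h => hkl (by rwa [sub_eq_zero] at h)
    simp [this, hkl]

lemma bcirc_injective {ι κ : Type} : Function.Injective (bcirc : Tensor ι κ p → _) := by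
  intro A B h
  funext k
  ext a b
  have := congrFun (congrFun h (k, a)) ((0 : Fin p), b)
  simpa [bcirc] using this

lemma Fmat_apply (j k : Fin p) :
    Fmat p j k = eC p (-((j : ℤ) * (k : ℤ))) / (Real.sqrt p : ℂ) := by
  have h : -(2 * (Real.pi : ℂ) * Complex.I * ((j : ℕ) : ℂ) * ((k : ℕ) : ℂ)) / (p : ℂ)
      = 2 * (Real.pi : ℂ) * Complex.I * (((-((j : ℤ) * (k : ℤ))) : ℤ) : ℂ) / (p : ℂ) := by
    push_cast
    ring
  rw [Fmat, eC]
  simp only [Matrix.of_apply]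
  rw [h]

lemma sqrtp_mul_sqrtp : ((Real.sqrt p : ℂ)) * (Real.sqrt p : ℂ) = (p : ℂ) := by
  rw [← Complex.ofReal_mul, Real.mul_self_sqrt (by positivity)]
  norm_num

lemma Fmat_conj_apply (l j : Fin p) :
    (starRingEnd ℂ) (Fmat p l j) = eC p ((l : ℤ) * (j : ℤ)) / (Real.sqrt p : ℂ) := by
  rw [Fmat_apply, map_div₀, conj_eC, Complex.conj_ofReal, neg_neg]

lemma sqrtp_ne_zero : ((Real.sqrt p : ℂ)) ≠ 0 := by
  have h0 : (0 : ℝ) < p := by exact_mod_cast Nat.pos_of_ne_zero (NeZero.ne p)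
  exact Complex.ofReal_ne_zero.mpr (ne_of_gt (Real.sqrt_pos.mpr h0))

lemma Fmat_unitary : (Fmat p)ᴴ * Fmat p = 1 := by
  ext i j
  simp only [Matrix.mul_apply, Matrix.conjTranspose_apply, Fmat_apply, Matrix.one_apply,
    RCLike.star_def]
  have hterm : ∀ k : Fin p,
      (starRingEnd ℂ) (eC p (-((k : ℤ) * (i : ℤ))) / (Real.sqrt p : ℂ)) *
        (eC p (-((k : ℤ) * (j : ℤ))) / (Real.sqrt p : ℂ))
      = eC p ((k : ℤ) * ((i : ℤ) - (j : ℤ))) / (p : ℂ) := by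
    intro k
    rw [map_div₀, conj_eC, Complex.conj_ofReal, neg_neg, div_mul_div_comm, ← eC_add,
      sqrtp_mul_sqrtp]
    congr 2
    ring
  simp_rw [hterm]
  rw [← Finset.sum_div, sum_eC ((i : ℤ) - (j : ℤ))]
  have hp : (p : ℂ) ≠ 0 := by
    exact_mod_cast Nat.cast_ne_zero.mpr (NeZero.ne p)
  by_cases hij : i = j
  · subst hij
    simp [hp]
  · rw [if_neg (fun h => hij ((dvd_sub_iff_eq i j).mp h)), if_neg hij, zero_div]

lemma Fmat_unitary' : Fmat p * (Fmat p)ᴴ = 1 := mul_eq_one_comm.mp Fmat_unitary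

lemma kron_one_conjTranspose {ι : Type} [Fintype ι] [DecidableEq ι]
    (F : Matrix (Fin p) (Fin p) ℂ) :
    (Matrix.kroneckerMap (· * ·) F (1 : Matrix ι ι ℂ))ᴴ
      = Matrix.kroneckerMap (· * ·) Fᴴ (1 : Matrix ι ι ℂ) := by
  ext ⟨k, a⟩ ⟨l, b⟩
  by_cases h : a = b
  · subst h
    simp [Matrix.conjTranspose_apply, Matrix.kroneckerMap_apply, Matrix.one_apply]
  · simp [Matrix.conjTranspose_apply, Matrix.kroneckerMap_apply, Matrix.one_apply,
      h, Ne.symm h]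

lemma kron_one_mul_kron_one {ι : Type} [Fintype ι] [DecidableEq ι]
    (F G : Matrix (Fin p) (Fin p) ℂ) :
    (Matrix.kroneckerMap (· * ·) F (1 : Matrix ι ι ℂ)) *
      (Matrix.kroneckerMap (· * ·) G (1 : Matrix ι ι ℂ))
      = Matrix.kroneckerMap (· * ·) (F * G) (1 : Matrix ι ι ℂ) := by
  rw [← Matrix.mul_kronecker_mul, Matrix.one_mul]

lemma kron_one_one {ι : Type} [Fintype ι] [DecidableEq ι] :
    (Matrix.kroneckerMap (· * ·) (1 : Matrix (Fin p) (Fin p) ℂ) (1 : Matrix ι ι ℂ))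
      = (1 : Matrix (Fin p × ι) (Fin p × ι) ℂ) :=
  Matrix.one_kronecker_one

/-- Fourier coefficients of the slices. -/
noncomputable def Ahat {ι κ : Type} (A : Tensor ι κ p) : Fin p → Matrix ι κ ℂ :=
  fun i => Matrix.of fun a b => ∑ d : Fin p, eC p ((d : ℤ) * (i : ℤ)) * A d a b

/-- Inverse Fourier transform of a family of blocks. -/
noncomputable def unhat {ι κ : Type} (D : Fin p → Matrix ι κ ℂ) : Tensor ι κ p :=
  fun d => Matrix.of fun a b => (∑ j : Fin p, eC p (-((d : ℤ) * (j : ℤ))) * D j a b) / (p : ℂ)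

lemma unhat_Ahat {ι κ : Type} (A : Tensor ι κ p) : unhat (Ahat A) = A := by
  have hp : (p : ℂ) ≠ 0 := by
    exact_mod_cast Nat.cast_ne_zero.mpr (NeZero.ne p)
  funext d
  ext a b
  simp only [unhat, Ahat, Matrix.of_apply]
  rw [div_eq_iff hp]
  have hterm : ∀ j : Fin p, eC p (-((d : ℤ) * (j : ℤ))) *
      (∑ d' : Fin p, eC p ((d' : ℤ) * (j : ℤ)) * A d' a b)
      = ∑ d' : Fin p, eC p ((j : ℤ) * ((d' : ℤ) - (d : ℤ))) * A d' a b := by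
    intro j
    rw [Finset.mul_sum]
    apply Finset.sum_congr rfl
    intro d' _
    rw [← mul_assoc, ← eC_add]
    congr 2
    ring
  simp_rw [hterm]
  rw [Finset.sum_comm]
  have hsum : ∀ d' : Fin p,
      (∑ j : Fin p, eC p ((j : ℤ) * ((d' : ℤ) - (d : ℤ))) * A d' a b)
        = (if (p : ℤ) ∣ ((d' : ℤ) - (d : ℤ)) then (p : ℂ) else 0) * A d' a b := by
    intro d'
    rw [← Finset.sum_mul, sum_eC]
  simp_rw [hsum]
  rw [Finset.sum_eq_single d]
  · rw [if_pos (by simp)]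
    ring
  · intro d' _ hd'
    rw [if_neg (fun h => hd' ((dvd_sub_iff_eq d' d).mp h)), zero_mul]
  · simp

lemma bcirc_unhat {ι κ : Type} [Fintype ι] [Fintype κ] [DecidableEq ι] [DecidableEq κ]
    (D : Fin p → Matrix ι κ ℂ) :
    bcirc (unhat D) =
      (Matrix.kroneckerMap (· * ·) (Fmat p) (1 : Matrix ι ι ℂ)) * bdiag D *
        (Matrix.kroneckerMap (· * ·) (Fmat p)ᴴ (1 : Matrix κ κ ℂ)) := by
  have hp : (p : ℂ) ≠ 0 := by
    exact_mod_cast Nat.cast_ne_zero.mpr (NeZero.ne p)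
  ext ⟨k, a⟩ ⟨l, b⟩
  -- RHS
  have hR : ((Matrix.kroneckerMap (· * ·) (Fmat p) (1 : Matrix ι ι ℂ)) * bdiag D *
      (Matrix.kroneckerMap (· * ·) (Fmat p)ᴴ (1 : Matrix κ κ ℂ))) (k, a) (l, b)
      = ∑ j : Fin p, eC p (((l : ℤ) - (k : ℤ)) * (j : ℤ)) * D j a b / (p : ℂ) := by
    rw [Matrix.mul_apply]
    simp only [Fintype.sum_prod_type, Matrix.mul_apply, Matrix.kroneckerMap_apply,
      Matrix.conjTranspose_apply, Matrix.one_apply, bdiag, Matrix.of_apply, star_mul',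
      apply_ite (star : ℂ → ℂ), star_one, star_zero, RCLike.star_def]
    -- collapse inner sums
    have : ∀ j : Fin p, ∀ c : κ,
        (∑ i : Fin p, ∑ x : ι, (Fmat p k i * if a = x then 1 else 0) *
          (if i = j then D i x c else 0)) *
          ((starRingEnd ℂ) (Fmat p l j) * if c = b then 1 else 0)
        = (if c = b then 1 else 0) * (Fmat p k j * D j a c * (starRingEnd ℂ) (Fmat p l j)) := by
      intro j c
      rw [Finset.sum_eq_single j]
      · rw [Finset.sum_eq_single a]
        · simp only [if_pos rfl, ite_self, if_true, mul_one]
          ring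
        · intro x _ hx
          simp [hx, Ne.symm hx]
        · simp
      · intro i _ hi
        simp [hi, Ne.symm hi]
      · simp
    simp_rw [this]
    rw [Finset.sum_comm]
    rw [Finset.sum_eq_single b]
    · apply Finset.sum_congr rfl
      intro j _
      have hE : eC p (-((k : ℤ) * (j : ℤ))) * eC p ((l : ℤ) * (j : ℤ))
          = eC p (((l : ℤ) - (k : ℤ)) * (j : ℤ)) := by
        rw [← eC_add]
        congr 1
        ring
      simp only [eq_self_iff_true, if_true, ite_true, one_mul]
      rw [Fmat_apply, Fmat_conj_apply, ← sqrtp_mul_sqrtp (p := p)]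
      field_simp [sqrtp_ne_zero]
      linear_combination (D j a b) * ((Real.sqrt p : ℂ))⁻¹ ^ 2 * hE
    · intro c _ hc
      rw [if_neg hc]
      simp
    · simp
  rw [hR]
  simp only [bcirc, unhat, Matrix.of_apply]
  rw [Finset.sum_div]
  apply Finset.sum_congr rfl
  intro j _
  have h2 : ((k - l : Fin p) : ℕ) = ((p - (l : ℕ)) + (k : ℕ)) % p := by
    rw [Fin.sub_def]
  have hl : (l : ℕ) ≤ p := le_of_lt l.2
  have h3 : ((k - l : Fin p) : ℤ) = ((p : ℤ) - (l : ℕ) + (k : ℕ)) % (p : ℤ) := by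
    rw [h2]
    push_cast [Nat.cast_sub hl]
    ring_nf
  have hdvd : ((p : ℤ)) ∣ (((k - l : Fin p) : ℤ) - ((k : ℤ) - (l : ℤ))) := by
    refine ⟨1 - ((p : ℤ) - (l : ℕ) + (k : ℕ)) / p, ?_⟩
    rw [h3, Int.emod_def]
    ring
  have hd : ((p : ℤ)) ∣ ((-(((k - l : Fin p) : ℤ) * (j : ℤ))) - (((l : ℤ) - (k : ℤ)) * (j : ℤ))) := by
    obtain ⟨c, hc⟩ := hdvd
    exact ⟨-c * j, by linear_combination (-(j : ℤ)) * hc⟩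
  rw [eC_congr hd]

lemma fblocks_unhat {ι κ : Type} [Fintype ι] [Fintype κ] [DecidableEq ι] [DecidableEq κ]
    (D : Fin p → Matrix ι κ ℂ) :
    fblocks (unhat D) = bdiag D := by
  rw [fblocks, bcirc_unhat, ← Matrix.mul_assoc, ← Matrix.mul_assoc,
    kron_one_mul_kron_one, Fmat_unitary, kron_one_one, Matrix.one_mul,
    Matrix.mul_assoc, kron_one_mul_kron_one, Fmat_unitary, kron_one_one, Matrix.mul_one]

lemma kronFH_mul_kronF {ι : Type} [Fintype ι] [DecidableEq ι] :
    (Matrix.kroneckerMap (· * ·) (Fmat p)ᴴ (1 : Matrix ι ι ℂ)) *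
      (Matrix.kroneckerMap (· * ·) (Fmat p) (1 : Matrix ι ι ℂ)) = 1 := by
  rw [kron_one_mul_kron_one, Fmat_unitary, kron_one_one]

lemma kronF_mul_kronFH {ι : Type} [Fintype ι] [DecidableEq ι] :
    (Matrix.kroneckerMap (· * ·) (Fmat p) (1 : Matrix ι ι ℂ)) *
      (Matrix.kroneckerMap (· * ·) (Fmat p)ᴴ (1 : Matrix ι ι ℂ)) = 1 := by
  rw [kron_one_mul_kron_one, Fmat_unitary', kron_one_one]

lemma tprod_unhat {ι κ μ' : Type} [Fintype ι] [Fintype κ] [Fintype μ']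
    [DecidableEq ι] [DecidableEq κ] [DecidableEq μ']
    (D : Fin p → Matrix ι κ ℂ) (E : Fin p → Matrix κ μ' ℂ) :
    tprod (unhat D) (unhat E) = unhat (fun i => D i * E i) := by
  apply bcirc_injective
  rw [bcirc_tprod, bcirc_unhat, bcirc_unhat, bcirc_unhat]
  simp only [Matrix.mul_assoc]
  rw [← Matrix.mul_assoc (Matrix.kroneckerMap (· * ·) (Fmat p)ᴴ (1 : Matrix κ κ ℂ))
      (Matrix.kroneckerMap (· * ·) (Fmat p) (1 : Matrix κ κ ℂ)) _, kronFH_mul_kronF,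
    Matrix.one_mul, ← bdiag_mul]
  simp only [Matrix.mul_assoc]

lemma tconjT_unhat {ι κ : Type} [Fintype ι] [Fintype κ] [DecidableEq ι] [DecidableEq κ]
    (D : Fin p → Matrix ι κ ℂ) :
    tconjT (unhat D) = unhat (fun i => (D i)ᴴ) := by
  apply bcirc_injective
  rw [bcirc_tconjT, bcirc_unhat, bcirc_unhat]
  rw [Matrix.conjTranspose_mul, Matrix.conjTranspose_mul, bdiag_conjTranspose,
    kron_one_conjTranspose, kron_one_conjTranspose, Matrix.conjTranspose_conjTranspose]
  simp only [Matrix.mul_assoc]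

lemma unhat_one {ι : Type} [Fintype ι] [DecidableEq ι] :
    unhat (fun _ : Fin p => (1 : Matrix ι ι ℂ)) = tid ι p := by
  apply bcirc_injective
  rw [bcirc_unhat, bcirc_tid, bdiag_one, Matrix.mul_one, kronF_mul_kronFH]

lemma isTUnitary_unhat {ι : Type} [Fintype ι] [DecidableEq ι] {D : Fin p → Matrix ι ι ℂ}
    (h1 : ∀ i, (D i)ᴴ * D i = 1) (h2 : ∀ i, D i * (D i)ᴴ = 1) :
    IsTUnitary (unhat D) := by
  constructor
  · rw [tconjT_unhat, tprod_unhat]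
    rw [show (fun i => (D i)ᴴ * D i) = fun _ => (1 : Matrix ι ι ℂ) from funext h1]
    exact unhat_one
  · rw [tconjT_unhat, tprod_unhat]
    rw [show (fun i => D i * (D i)ᴴ) = fun _ => (1 : Matrix ι ι ℂ) from funext h2]
    exact unhat_one

end TProd


open TProd Matrix Kronecker

/-- `S` is F-diagonal in the strict sense: each Fourier-domain diagonal block is a
diagonal matrix with nonnegative (real) entries, and off-diagonal blocks vanish. -/
def IsFDiagFin {m n p : ℕ} [NeZero p] (S : Tensor (Fin m) (Fin n) p) : Prop :=
  (∀ (i j : Fin p) (a : Fin m) (b : Fin n),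
      fblocks S (i, a) (j, b) ≠ 0 → i = j ∧ (a : ℕ) = (b : ℕ)) ∧
  (∀ x y, 0 ≤ (fblocks S x y).re ∧ (fblocks S x y).im = 0)

/-- every tensor `A ∈ ℂ^{m×n×p}` admits a T-SVD `A = U * S * Vᴴ` with
`U`, `V` unitary and `S` F-diagonal with nonnegative entries. -/
theorem exists_tsvd {m n p : ℕ} [NeZero p] (A : Tensor (Fin m) (Fin n) p) :
    ∃ (U : Tensor (Fin m) (Fin m) p) (S : Tensor (Fin m) (Fin n) p)
      (V : Tensor (Fin n) (Fin n) p),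
      IsTUnitary U ∧ IsTUnitary V ∧ IsFDiagFin S ∧
        A = tprod U (tprod S (tconjT V)) := by
  classical
  have hsvd := fun i : Fin p => matrix_svd (Ahat A i)
  choose Uh Sh Vh hU1 hU2 hV1 hV2 hSd hSpos hfac using hsvd
  refine ⟨unhat Uh, unhat Sh, unhat Vh, isTUnitary_unhat hU1 hU2,
    isTUnitary_unhat hV1 hV2, ?_, ?_⟩
  · constructor
    · intro i j a b hne
      rw [fblocks_unhat] at hne
      by_cases hij : i = j
      · subst hij
        refine ⟨rfl, ?_⟩
        apply hSd i a b
        simpa [bdiag] using hne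
      · exfalso
        apply hne
        simp [bdiag, hij]
    · intro x y
      rcases x with ⟨i, a⟩
      rcases y with ⟨j, b⟩
      rw [fblocks_unhat]
      by_cases hij : i = j
      · subst hij
        simpa [bdiag] using hSpos i a b
      · simp [bdiag, hij]
  · rw [tconjT_unhat, tprod_unhat, tprod_unhat]
    have hA : (fun i => Uh i * (Sh i * (Vh i)ᴴ)) = Ahat A := by
      funext i
      rw [← Matrix.mul_assoc, ← hfac i]
    rw [hA, unhat_Ahat]
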